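/- Let p, q, N be real numbers with 0 < q < 2 < p and 2 < N < 2(p−q)/(p−2), and set α := (N−q)/(2−q) − p/(p−2). Let (X,d) be a metric space, μ a Borel measure on X, x₀ ∈ X and k > 0, and suppose μ(B_ρ(x₀)) = k ω_N ρ^N for all ρ > 0. Then for every λ > 0: ∫_X (λ + d(x₀,x)^{2−q})^{p/(2−p)} d(x₀,x)^{−q} dμ(x) = k ω_N N λ^{α} ∫₀^∞ (1 + y^{2−q})^{p/(2−p)} y^{N−q−1} dy, and in particular this quantity is finite and equal to λ^{α} times its value at λ = 1. -/

import Mathlib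

open MeasureTheory Set

/-- `ω_N = π^{N/2} / Γ(N/2 + 1)`, the volume of the unit ball in dimension `N`. -/
noncomputable def omegaN (N : ℝ) : ℝ := Real.pi ^ (N / 2) / Real.Gamma (N / 2 + 1)

lemma ckn_aux_integrable (p q N : ℝ) (hq : 0 < q) (hq2 : q < 2) (hp : 2 < p)
    (hN1 : 2 < N) (hN2 : N < 2 * (p - q) / (p - 2)) :
    IntegrableOn (fun y : ℝ => (1 + y ^ (2 - q)) ^ (p / (2 - p)) * y ^ (N - q - 1)) (Ioi 0) := by
  have hmeas : Measurable (fun y : ℝ => (1 + y ^ (2 - q)) ^ (p / (2 - p)) * y ^ (N - q - 1)) := by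
    measurability
  have hexp : p / (2 - p) ≤ 0 := by
    apply div_nonpos_of_nonneg_of_nonpos <;> linarith
  have h1 : IntegrableOn (fun y : ℝ => (1 + y ^ (2 - q)) ^ (p / (2 - p)) * y ^ (N - q - 1))
      (Ioc 0 1) := by
    have hint : IntegrableOn (fun y : ℝ => y ^ (N - q - 1)) (Ioc 0 1) :=
      (intervalIntegral.intervalIntegrable_rpow' (by linarith)).1
    refine Integrable.mono hint hmeas.aestronglyMeasurable.restrict ?_
    filter_upwards [ae_restrict_mem measurableSet_Ioc] with y hy
    have hy0 : 0 < y := hy.1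
    have hb : (0:ℝ) ≤ y ^ (N - q - 1) := Real.rpow_nonneg hy0.le _
    rw [Real.norm_eq_abs, Real.norm_eq_abs, abs_of_nonneg hb, abs_of_nonneg]
    · calc (1 + y ^ (2 - q)) ^ (p / (2 - p)) * y ^ (N - q - 1)
          ≤ 1 * y ^ (N - q - 1) := by
            apply mul_le_mul_of_nonneg_right _ hb
            exact Real.rpow_le_one_of_one_le_of_nonpos
              (by nlinarith [Real.rpow_nonneg hy0.le (2 - q)]) hexp
        _ = y ^ (N - q - 1) := one_mul _
    · exact mul_nonneg (Real.rpow_nonneg (by nlinarith [Real.rpow_nonneg hy0.le (2 - q)]) _) hb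
  have hβ : (2 - q) * (p / (2 - p)) + (N - q - 1) < -1 := by
    have hp2 : (0:ℝ) < p - 2 := by linarith
    have ht : p / (2 - p) * (2 - p) = p := div_mul_cancel₀ _ (by linarith)
    have h := (lt_div_iff₀ hp2).mp hN2
    nlinarith [h, ht]
  have h2 : IntegrableOn (fun y : ℝ => (1 + y ^ (2 - q)) ^ (p / (2 - p)) * y ^ (N - q - 1))
      (Ioi 1) := by
    have hint : IntegrableOn (fun y : ℝ => y ^ ((2 - q) * (p / (2 - p)) + (N - q - 1)))
        (Ioi 1) := integrableOn_Ioi_rpow_of_lt hβ one_pos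
    refine Integrable.mono hint hmeas.aestronglyMeasurable.restrict ?_
    filter_upwards [ae_restrict_mem measurableSet_Ioi] with y hy
    have hy1 : (1:ℝ) < y := hy
    have hy0 : (0:ℝ) < y := by linarith
    have hb : (0:ℝ) ≤ y ^ (N - q - 1) := Real.rpow_nonneg hy0.le _
    have hyq : (0:ℝ) < y ^ (2 - q) := Real.rpow_pos_of_pos hy0 _
    rw [Real.norm_eq_abs, Real.norm_eq_abs, abs_of_nonneg (Real.rpow_nonneg hy0.le _),
      abs_of_nonneg (mul_nonneg (Real.rpow_nonneg (by linarith) _) hb)]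
    calc (1 + y ^ (2 - q)) ^ (p / (2 - p)) * y ^ (N - q - 1)
        ≤ (y ^ (2 - q)) ^ (p / (2 - p)) * y ^ (N - q - 1) := by
          apply mul_le_mul_of_nonneg_right _ hb
          exact Real.rpow_le_rpow_of_nonpos hyq (by linarith) hexp
      _ = y ^ ((2 - q) * (p / (2 - p)) + (N - q - 1)) := by
          rw [← Real.rpow_mul hy0.le, Real.rpow_add hy0]
  have := h1.union h2
  rwa [Ioc_union_Ioi_eq_Ioi (zero_le_one)] at this

lemma ckn_cone_lintegral (c N : ℝ) (hc : 0 ≤ c) (hN : 0 < N)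
    {X : Type*} [MetricSpace X] [MeasurableSpace X] [BorelSpace X]
    (μ : Measure X) (x₀ : X)
    (hcone : ∀ ρ > (0:ℝ), μ (Metric.ball x₀ ρ) = ENNReal.ofReal (c * ρ ^ N))
    (f : ℝ → ENNReal) (hf : Measurable f) :
    ∫⁻ x, f (dist x₀ x) ∂μ
      = ∫⁻ r in Ioi (0:ℝ), f r * ENNReal.ofReal (c * N * r ^ (N - 1)) := by
  have hdist : Measurable (fun x : X => dist x₀ x) :=
    (continuous_const.dist continuous_id).measurable
  have hD : Measurable (fun r : ℝ => ENNReal.ofReal (c * N * r ^ (N - 1))) := by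
    measurability
  have hmap : ∫⁻ x, f (dist x₀ x) ∂μ = ∫⁻ r, f r ∂(μ.map (fun x => dist x₀ x)) :=
    (lintegral_map hf hdist).symm
  have hν : μ.map (fun x => dist x₀ x)
      = (volume.restrict (Ioi (0:ℝ))).withDensity
          (fun r => ENNReal.ofReal (c * N * r ^ (N - 1))) := by
    have hmapIio : ∀ a : ℝ, (μ.map (fun x => dist x₀ x)) (Iio a) = μ (Metric.ball x₀ a) := by
      intro a
      rw [Measure.map_apply hdist measurableSet_Iio]
      congr 1
      ext x
      simp [Metric.mem_ball, dist_comm]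
    have hwdIio : ∀ a : ℝ,
        ((volume.restrict (Ioi (0:ℝ))).withDensity
          (fun r => ENNReal.ofReal (c * N * r ^ (N - 1)))) (Iio a)
        = ∫⁻ r in Ioo (0:ℝ) a, ENNReal.ofReal (c * N * r ^ (N - 1)) := by
      intro a
      rw [withDensity_apply _ measurableSet_Iio, Measure.restrict_restrict measurableSet_Iio,
        Iio_inter_Ioi]
    have hval : ∀ a : ℝ, 0 < a →
        ∫⁻ r in Ioo (0:ℝ) a, ENNReal.ofReal (c * N * r ^ (N - 1))
          = ENNReal.ofReal (c * a ^ N) := by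
      intro a ha
      have hInt0 : IntegrableOn (fun r : ℝ => c * N * r ^ (N - 1)) (Ioc 0 a) :=
        ((intervalIntegral.intervalIntegrable_rpow' (by linarith)).1).const_mul (c * N)
      have hInt : IntegrableOn (fun r : ℝ => c * N * r ^ (N - 1)) (Ioo 0 a) :=
        hInt0.mono_set Ioo_subset_Ioc_self
      rw [← ofReal_integral_eq_lintegral_ofReal hInt ?_]
      · congr 1
        rw [← integral_Ioc_eq_integral_Ioo, ← intervalIntegral.integral_of_le ha.le]
        rw [intervalIntegral.integral_const_mul, integral_rpow (Or.inl (by linarith))]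
        rw [sub_add_cancel, Real.zero_rpow hN.ne']
        field_simp
        ring
      · filter_upwards [ae_restrict_mem measurableSet_Ioo] with r hr
        exact mul_nonneg (mul_nonneg hc hN.le) (Real.rpow_nonneg hr.1.le _)
    refine Measure.ext_of_generateFrom_of_iUnion (range Iio) (fun n => Iio (n:ℝ))
      (BorelSpace.measurable_eq.trans (borel_eq_generateFrom_Iio ℝ)) isPiSystem_Iio
      ?_ (fun n => mem_range_self _) ?_ ?_
    · ext x
      simp only [mem_iUnion, mem_Iio, mem_univ, iff_true]
      obtain ⟨n, hn⟩ := exists_nat_gt x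
      exact ⟨n, hn⟩
    · intro n
      rw [hmapIio]
      rcases le_or_gt (n:ℝ) 0 with h | h
      · rw [Metric.ball_eq_empty.2 h]; simp
      · rw [hcone _ h]; exact ENNReal.ofReal_ne_top
    · rintro s ⟨a, rfl⟩
      rw [hmapIio, hwdIio]
      rcases le_or_gt a 0 with h | h
      · rw [Metric.ball_eq_empty.2 h,
          Ioo_eq_empty (by exact fun hh => absurd (hh.trans_le h) (lt_irrefl _))]
        simp
      · rw [hcone _ h, hval _ h]
  rw [hmap, hν, lintegral_withDensity_eq_lintegral_mul _ hD hf]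
  exact lintegral_congr fun r => mul_comm _ _

lemma ckn_scaling (p q N : ℝ) (hq : 0 < q) (hq2 : q < 2) (hp : 2 < p)
    (c : ℝ) (lam : ℝ) (hlam : 0 < lam) :
    ∫ r in Ioi (0:ℝ), c * N * ((lam + r ^ (2 - q)) ^ (p / (2 - p)) * r ^ (N - q - 1))
      = c * N * lam ^ ((N - q) / (2 - q) - p / (p - 2)) *
        ∫ y in Ioi (0:ℝ), (1 + y ^ (2 - q)) ^ (p / (2 - p)) * y ^ (N - q - 1) := by
  have h2q : (0:ℝ) < 2 - q := by linarith
  set s : ℝ := lam ^ (2 - q)⁻¹ with hs_def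
  have hs : 0 < s := Real.rpow_pos_of_pos hlam _
  set C : ℝ := lam ^ (p / (2 - p)) * s ^ (N - q - 1) with hC_def
  set h₁ : ℝ → ℝ := fun y => (1 + y ^ (2 - q)) ^ (p / (2 - p)) * y ^ (N - q - 1) with h₁_def
  set hl : ℝ → ℝ := fun r => (lam + r ^ (2 - q)) ^ (p / (2 - p)) * r ^ (N - q - 1) with hl_def
  have hEq : EqOn (fun y => C * h₁ y) (fun y => hl (s * y)) (Ioi 0) := by
    intro y hy
    have hy0 : (0:ℝ) < y := hy
    have hsy : (s * y) ^ (2 - q) = lam * y ^ (2 - q) := by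
      rw [Real.mul_rpow hs.le hy0.le, hs_def, ← Real.rpow_mul hlam.le,
        inv_mul_cancel₀ h2q.ne', Real.rpow_one]
    simp only [hl_def, h₁_def, hC_def]
    rw [hsy, show lam + lam * y ^ (2 - q) = lam * (1 + y ^ (2 - q)) by ring,
      Real.mul_rpow hlam.le (by positivity), Real.mul_rpow hs.le hy0.le]
    ring
  have hval : ∫ r in Ioi (0:ℝ), hl r = lam ^ ((N - q) / (2 - q) - p / (p - 2)) *
      ∫ y in Ioi (0:ℝ), h₁ y := by
    have hcv := integral_comp_mul_left_Ioi hl 0 hs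
    rw [mul_zero] at hcv
    have hL : ∫ y in Ioi (0:ℝ), hl (s * y) = C * ∫ y in Ioi (0:ℝ), h₁ y := by
      rw [← setIntegral_congr_fun measurableSet_Ioi hEq, integral_const_mul]
    rw [hL, smul_eq_mul] at hcv
    have : ∫ r in Ioi (0:ℝ), hl r = s * (C * ∫ y in Ioi (0:ℝ), h₁ y) := by
      rw [hcv]; field_simp
    rw [this]
    have hpow : s * C = lam ^ ((N - q) / (2 - q) - p / (p - 2)) := by
      have h1 : s * s ^ (N - q - 1) = s ^ (N - q) := by
        nth_rewrite 1 [← Real.rpow_one s]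
        rw [← Real.rpow_add hs]; ring_nf
      have h2 : s ^ (N - q) = lam ^ ((N - q) / (2 - q)) := by
        rw [hs_def, ← Real.rpow_mul hlam.le]
        congr 1; field_simp
      have h3 : p / (2 - p) = -(p / (p - 2)) := by
        rw [show (2 - p) = -(p - 2) by ring, div_neg]
      rw [hC_def, show s * (lam ^ (p / (2 - p)) * s ^ (N - q - 1))
          = (s * s ^ (N - q - 1)) * lam ^ (p / (2 - p)) by ring, h1, h2, h3,
        ← Real.rpow_add hlam]
      ring_nf
    rw [← hpow]; ring
  rw [integral_const_mul, hval]; ring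

lemma ckn_integrable_lam (p q N : ℝ) (hq : 0 < q) (hq2 : q < 2) (hp : 2 < p)
    (hN1 : 2 < N) (hN2 : N < 2 * (p - q) / (p - 2)) (lam : ℝ) (hlam : 0 < lam) :
    IntegrableOn (fun r : ℝ => (lam + r ^ (2 - q)) ^ (p / (2 - p)) * r ^ (N - q - 1))
      (Ioi 0) := by
  have h2q : (0:ℝ) < 2 - q := by linarith
  set s : ℝ := lam ^ (2 - q)⁻¹ with hs_def
  have hs : 0 < s := Real.rpow_pos_of_pos hlam _
  set C : ℝ := lam ^ (p / (2 - p)) * s ^ (N - q - 1) with hC_def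
  set h₁ : ℝ → ℝ := fun y => (1 + y ^ (2 - q)) ^ (p / (2 - p)) * y ^ (N - q - 1) with h₁_def
  set hl : ℝ → ℝ := fun r => (lam + r ^ (2 - q)) ^ (p / (2 - p)) * r ^ (N - q - 1) with hl_def
  have hEq : EqOn (fun y => C * h₁ y) (fun y => hl (s * y)) (Ioi 0) := by
    intro y hy
    have hy0 : (0:ℝ) < y := hy
    have hsy : (s * y) ^ (2 - q) = lam * y ^ (2 - q) := by
      rw [Real.mul_rpow hs.le hy0.le, hs_def, ← Real.rpow_mul hlam.le,
        inv_mul_cancel₀ h2q.ne', Real.rpow_one]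
    simp only [hl_def, h₁_def, hC_def]
    rw [hsy, show lam + lam * y ^ (2 - q) = lam * (1 + y ^ (2 - q)) by ring,
      Real.mul_rpow hlam.le (by positivity), Real.mul_rpow hs.le hy0.le]
    ring
  have hCint : IntegrableOn (fun y => C * h₁ y) (Ioi (0:ℝ)) :=
    (ckn_aux_integrable p q N hq hq2 hp hN1 hN2).const_mul C
  have hcomp : IntegrableOn (fun y => hl (s * y)) (Ioi (0:ℝ)) :=
    hCint.congr_fun hEq measurableSet_Ioi
  have := (integrableOn_Ioi_comp_mul_left_iff hl 0 hs).1 hcomp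
  rwa [mul_zero] at this

/-- On an `N`-volume cone at `x₀` with density `k`, the CKN integral
`∫_X (λ + d^{2-q})^{p/(2-p)} d^{-q} dμ` equals
`k ω_N N λ^α ∫₀^∞ (1 + y^{2-q})^{p/(2-p)} y^{N-q-1} dy` where
`α = (N-q)/(2-q) - p/(p-2)`; in particular it is finite and scales as `λ^α`. -/
theorem ckn_integral_on_volume_cone (p q N α : ℝ)
    (hq : 0 < q) (hq2 : q < 2) (hp : 2 < p)
    (hN1 : 2 < N) (hN2 : N < 2 * (p - q) / (p - 2))
    (hα : α = (N - q) / (2 - q) - p / (p - 2))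
    {X : Type*} [MetricSpace X] [MeasurableSpace X] [BorelSpace X]
    (μ : Measure X) (x₀ : X) (k : ℝ) (hk : 0 < k)
    (hcone : ∀ ρ > (0:ℝ), μ (Metric.ball x₀ ρ) = ENNReal.ofReal (k * omegaN N * ρ ^ N))
    (lam : ℝ) (hlam : 0 < lam) :
    (∫⁻ x, ENNReal.ofReal ((lam + dist x₀ x ^ (2 - q)) ^ (p / (2 - p))) *
          ENNReal.ofReal (dist x₀ x) ^ (-q) ∂μ =
        ENNReal.ofReal (k * omegaN N * N * lam ^ α *
          ∫ y in Ioi (0:ℝ), (1 + y ^ (2 - q)) ^ (p / (2 - p)) * y ^ (N - q - 1))) ∧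
      (∫⁻ x, ENNReal.ofReal ((lam + dist x₀ x ^ (2 - q)) ^ (p / (2 - p))) *
          ENNReal.ofReal (dist x₀ x) ^ (-q) ∂μ ≠ ⊤) ∧
      (∫⁻ x, ENNReal.ofReal ((lam + dist x₀ x ^ (2 - q)) ^ (p / (2 - p))) *
          ENNReal.ofReal (dist x₀ x) ^ (-q) ∂μ =
        ENNReal.ofReal (lam ^ α) *
          ∫⁻ x, ENNReal.ofReal ((1 + dist x₀ x ^ (2 - q)) ^ (p / (2 - p))) *
            ENNReal.ofReal (dist x₀ x) ^ (-q) ∂μ) := by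
  subst hα
  have hωpos : 0 < omegaN N := by
    unfold omegaN
    exact div_pos (Real.rpow_pos_of_pos Real.pi_pos _) (Real.Gamma_pos_of_pos (by linarith))
  set c : ℝ := k * omegaN N with hc_def
  have hc : 0 < c := mul_pos hk hωpos
  have hN : 0 < N := by linarith
  have main : ∀ l : ℝ, 0 < l →
      ∫⁻ x, ENNReal.ofReal ((l + dist x₀ x ^ (2 - q)) ^ (p / (2 - p))) *
          ENNReal.ofReal (dist x₀ x) ^ (-q) ∂μ =
        ENNReal.ofReal (c * N * l ^ ((N - q) / (2 - q) - p / (p - 2)) *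
          ∫ y in Ioi (0:ℝ), (1 + y ^ (2 - q)) ^ (p / (2 - p)) * y ^ (N - q - 1)) := by
    intro l hl
    set F : ℝ → ENNReal := fun r =>
      ENNReal.ofReal ((l + r ^ (2 - q)) ^ (p / (2 - p))) * ENNReal.ofReal r ^ (-q) with hF_def
    have hF : Measurable F := by
      apply Measurable.mul
      · measurability
      · exact (ENNReal.measurable_ofReal.comp measurable_id).pow_const _
    have step1 := ckn_cone_lintegral c N hc.le hN μ x₀ hcone F hF
    rw [step1]
    have step2 : ∫⁻ r in Ioi (0:ℝ), F r * ENNReal.ofReal (c * N * r ^ (N - 1))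
        = ∫⁻ r in Ioi (0:ℝ),
            ENNReal.ofReal (c * N * ((l + r ^ (2 - q)) ^ (p / (2 - p)) * r ^ (N - q - 1))) := by
      refine setLIntegral_congr_fun measurableSet_Ioi (fun r hr => ?_)
      have hr0 : (0:ℝ) < r := hr
      have hb : (0:ℝ) < l + r ^ (2 - q) := by positivity
      rw [hF_def]
      simp only
      rw [ENNReal.ofReal_rpow_of_pos hr0, ← ENNReal.ofReal_mul (Real.rpow_nonneg hb.le _),
        ← ENNReal.ofReal_mul (by positivity)]
      congr 1
      rw [show c * N * ((l + r ^ (2 - q)) ^ (p / (2 - p)) * r ^ (N - q - 1))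
          = (l + r ^ (2 - q)) ^ (p / (2 - p)) * (r ^ (N - q - 1) * (c * N)) by ring]
      rw [show N - q - 1 = -q + (N - 1) by ring, Real.rpow_add hr0]
      ring
    rw [step2]
    have hInt : IntegrableOn
        (fun r : ℝ => c * N * ((l + r ^ (2 - q)) ^ (p / (2 - p)) * r ^ (N - q - 1)))
        (Ioi 0) :=
      (ckn_integrable_lam p q N hq hq2 hp hN1 hN2 l hl).const_mul (c * N)
    have hnn : 0 ≤ᵐ[volume.restrict (Ioi (0:ℝ))]
        fun r : ℝ => c * N * ((l + r ^ (2 - q)) ^ (p / (2 - p)) * r ^ (N - q - 1)) := by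
      filter_upwards [ae_restrict_mem measurableSet_Ioi] with r hr
      have hr0 : (0:ℝ) < r := hr
      have hb : (0:ℝ) < l + r ^ (2 - q) := by positivity
      positivity
    rw [← ofReal_integral_eq_lintegral_ofReal hInt hnn,
      ckn_scaling p q N hq hq2 hp c l hl]
  refine ⟨main lam hlam, ?_, ?_⟩
  · rw [main lam hlam]; exact ENNReal.ofReal_ne_top
  · have h1 := main 1 one_pos
    rw [Real.one_rpow] at h1
    rw [main lam hlam, h1, ← ENNReal.ofReal_mul (Real.rpow_nonneg hlam.le _)]
    congr 1
    ring
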